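/- Let p ∈ [1,2) and let x, y ∈ C_p([a,b],V) be such that, for some choice of basis of V, their coordinate expressions x = (x¹,…,x^d) and y = (y¹,…,y^d) satisfy x¹ = y¹ = ρ : [a,b] → ℝ for a strictly monotone continuous function ρ, and suppose x_a = y_a. Then S(x)_{[a,b]} = S(y)_{[a,b]} if and only if x = y. -/

import Mathlib

noncomputable section

open Filter Topology MeasureTheory

/-- Model of a finite-dimensional real inner product space of dimension `d`. -/
abbrev Vec (d : ℕ) : Type := EuclideanSpace ℝ (Fin d)

/-- The `k`-th tensor power `V^{⊗k}` of `Vec d` with its Hilbert–Schmidt inner product,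
realised in coordinates indexed by words of length `k` over the alphabet `Fin d`. -/
abbrev TLevel (d k : ℕ) : Type := EuclideanSpace ℝ (Fin k → Fin d)

/-- The extended tensor algebra `T((V)) = ∏_{k ≥ 0} V^{⊗k}`. -/
abbrev TSeq (d : ℕ) : Type := ∀ k : ℕ, TLevel d k

/-- Riemann–Stieltjes sum of `∫ f dg` over `[a,b]` along the uniform partition with `n` pieces. -/
def rsSum (f g : ℝ → ℝ) (a b : ℝ) (n : ℕ) : ℝ :=
  ∑ i ∈ Finset.range n,
    f (a + i * (b - a) / n) *
      (g (a + (i + 1) * (b - a) / n) - g (a + i * (b - a) / n))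

/-- The (Young / Riemann–Stieltjes) integral `∫_a^b f dg`, defined as the limit of
Riemann–Stieltjes sums along uniform partitions (junk value if no limit exists). -/
def rsInt (f g : ℝ → ℝ) (a b : ℝ) : ℝ :=
  limUnder atTop (rsSum f g a b)

/-- Iterated (Young) integral coordinate of a path, with the word given in *reverse*
order, so that `sigWord x a (i :: w) t = ∫_a^t (sigWord x a w u) d(x^i_u)`. -/
def sigWord {d : ℕ} (x : ℝ → Vec d) (a : ℝ) : List (Fin d) → ℝ → ℝ
  | [], _ => 1
  | i :: w, t => rsInt (fun u => sigWord x a w u) (fun u => x u i) a t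

/-- The `k`-th signature level `S(x)^{(k)}_{[a,b]} ∈ V^{⊗k}`, in coordinates. -/
def sigLevel {d : ℕ} (x : ℝ → Vec d) (a b : ℝ) (k : ℕ) : TLevel d k :=
  WithLp.toLp 2 (fun idx => sigWord x a (List.ofFn idx).reverse b)

/-- The signature transform `S(x)_{[a,b]} ∈ T((V))`. -/
def signatureT {d : ℕ} (x : ℝ → Vec d) (a b : ℝ) : TSeq d :=
  fun k => sigLevel x a b k

/-- The set of sums `Σ_i ‖x_{t_{i+1}} − x_{t_i}‖^p` over partitions `a = t_0 ≤ … ≤ t_n = b`. -/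
def varSums {E : Type*} [NormedAddCommGroup E] (x : ℝ → E) (p a b : ℝ) : Set ℝ :=
  { s | ∃ (n : ℕ) (t : ℕ → ℝ), Monotone t ∧ t 0 = a ∧ t n = b ∧
      s = ∑ i ∈ Finset.range n, ‖x (t (i + 1)) - x (t i)‖ ^ p }

/-- `x ∈ C_p([a,b], E)` : continuous with finite `p`-variation on `[a,b]`. -/
def MemCp {E : Type*} [NormedAddCommGroup E] (x : ℝ → E) (p a b : ℝ) : Prop :=
  ContinuousOn x (Set.Icc a b) ∧ BddAbove (varSums x p a b)

/-- The `p`-variation norm `‖x‖_{p,[a,b]}`. -/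
def pvar {E : Type*} [NormedAddCommGroup E] (x : ℝ → E) (p a b : ℝ) : ℝ :=
  sSup (varSums x p a b) ^ (1 / p)

/-- The product of the extended tensor algebra `T((V))`:
`(v · w)_k = Σ_{l=0}^{k} v_l ⊗ w_{k-l}`, in coordinates. -/
def seqMul {d : ℕ} (v w : TSeq d) : TSeq d :=
  fun k => WithLp.toLp 2 fun idx =>
    ∑ l : Fin (k + 1),
      v l.1 (fun i => idx ⟨i.1, lt_of_lt_of_le i.2 (Nat.lt_succ_iff.mp l.2)⟩) *
        w (k - l.1) (fun j => idx ⟨l.1 + j.1, by have hj := j.2; omega⟩)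

/-- The unit `1 = (1,0,0,…)` of `T((V))`. -/
def seqOne (d : ℕ) : TSeq d :=
  fun k => if k = 0 then WithLp.toLp 2 (fun _ => (1 : ℝ)) else 0

/-- Truncation (canonical projection) `π_N : T((V)) → T_N(V)`. -/
def truncTS {d : ℕ} (N : ℕ) (v : TSeq d) : TSeq d :=
  fun k => if k ≤ N then v k else 0

/-- Tensor polynomials: elements of `T(V) = ⊕_k V^{⊗k}` inside `T((V))`. -/
def FinSuppTS {d : ℕ} (f : TSeq d) : Prop := ∃ N, ∀ k, N < k → f k = 0

/-- Pairing of a tensor polynomial over the dual with an element of `T((V))`,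
using the canonical (Hilbert–Schmidt) identification `(V^{⊗k})* ≅ (V*)^{⊗k}`. -/
def pairTS {d : ℕ} (f v : TSeq d) : ℝ :=
  ∑' k, @inner ℝ _ _ (f k) (v k)

/-- The shuffle product on `T(V*)`, in coordinates:
`(f ⧢ g)_n(w) = Σ_{A ⊆ {1,…,n}} f_{|A|}(w|_A) · g_{n−|A|}(w|_{Aᶜ})`. -/
def shuffleTS {d : ℕ} (f g : TSeq d) : TSeq d :=
  fun n => WithLp.toLp 2 fun idx =>
    ∑ A : Finset (Fin n),
      f A.card (fun i => idx (A.orderIsoOfFin rfl i).1) *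
        g (n - A.card) (fun j =>
          idx ((Aᶜ).orderIsoOfFin (by simp [Finset.card_compl]) j).1)

/-- Concatenation `x * y` of paths, where `x` lives on `[a,b]` and `y` on `[b,c]`. -/
def concatP {d : ℕ} (x y : ℝ → Vec d) (b : ℝ) : ℝ → Vec d :=
  fun t => if t ≤ b then x t else y t - y b + x b

/-- Signatures over a fixed interval `[a,b]` of paths in `C_p([a,b],V)`. -/
def SigSet (d : ℕ) (p a b : ℝ) : Set (TSeq d) :=
  { s | ∃ x : ℝ → Vec d, MemCp x p a b ∧ s = signatureT x a b }

/-- `S_p`: the image of `C_p(V)` under the signature transform. -/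
def SigSetAll (d : ℕ) (p : ℝ) : Set (TSeq d) :=
  { s | ∃ (a b : ℝ) (x : ℝ → Vec d), a ≤ b ∧ MemCp x p a b ∧ s = signatureT x a b }

/-- The truncated tensor algebra `T_N(V) = ⊕_{k=0}^N V^{⊗k}` as a submodule of `T((V))`. -/
def truncSubmodule (d N : ℕ) : Submodule ℝ (TSeq d) where
  carrier := { v | ∀ k, N < k → v k = 0 }
  add_mem' := fun {u v} hu hv k hk => by
    show u k + v k = 0
    rw [hu k hk, hv k hk, add_zero]
  zero_mem' := fun k _ => rfl
  smul_mem' := fun c {v} hv k hk => by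
    show c • v k = 0
    rw [hv k hk, smul_zero]

/-- Paths in `C_p([a,b],V)` started at the origin. -/
def PathsFrom0 (d : ℕ) (p a b : ℝ) : Type := {x : ℝ → Vec d // MemCp x p a b ∧ x a = 0}

/-- Tree-like equivalence: two paths are equivalent iff their signatures agree. -/
def sigSetoid (d : ℕ) (p a b : ℝ) : Setoid (PathsFrom0 d p a b) where
  r x y := signatureT x.1 a b = signatureT y.1 a b
  iseqv := ⟨fun _ => rfl, Eq.symm, Eq.trans⟩

/-- The space `𝒞_p` of unparameterised paths. -/
def UPath (d : ℕ) (p a b : ℝ) : Type := Quotient (sigSetoid d p a b)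

/-- The signature transform on unparameterised paths. -/
def sigQ (d : ℕ) (p a b : ℝ) : UPath d p a b → TSeq d :=
  Quotient.lift (fun x => signatureT x.1 a b) (fun _ _ h => h)

/-- The product topology `χ_pr` on `𝒞_p`: the topology induced by the signature
transform from the product topology on `T((V)) = ∏_k V^{⊗k}`. -/
def prodTop (d : ℕ) (p a b : ℝ) : TopologicalSpace (UPath d p a b) :=
  TopologicalSpace.induced (sigQ d p a b) inferInstance

/-- The tree-reduced length of an unparameterised path: the infimum of the `1`-variation
over the bounded-variation representatives of the class. -/
def treeLength (d : ℕ) (p a b : ℝ) (q : UPath d p a b) : ℝ :=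
  sInf { L | ∃ x : PathsFrom0 d p a b,
    Quotient.mk (sigSetoid d p a b) x = q ∧ MemCp x.1 1 a b ∧ L = pvar x.1 1 a b }

/-- `B(r)`: unparameterised paths possessing a bounded-variation representative and
whose tree-reduced length is at most `r`. -/
def ballB (d : ℕ) (p a b r : ℝ) : Set (UPath d p a b) :=
  { q | (∃ x : PathsFrom0 d p a b,
      Quotient.mk (sigSetoid d p a b) x = q ∧ MemCp x.1 1 a b) ∧ treeLength d p a b q ≤ r }

/-- The `φ`-inner product `⟨u,v⟩_φ = Σ_k φ(k) ⟨u_k, v_k⟩` on tensor sequences. -/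
def kTS (d : ℕ) (φ : ℕ → ℝ) (u v : TSeq d) : ℝ :=
  ∑' k, φ k * @inner ℝ _ _ (u k) (v k)

/-- The `φ`-signature kernel on unparameterised paths. -/
def kQ (d : ℕ) (p a b : ℝ) (φ : ℕ → ℝ) (q q' : UPath d p a b) : ℝ :=
  kTS d φ (sigQ d p a b q) (sigQ d p a b q')

/-- The two-parameter `φ`-signature kernel `k_φ(x,y)_{s,t}` of two paths. -/
def kPath (d : ℕ) (φ : ℕ → ℝ) (x y : ℝ → Vec d) (a c s t : ℝ) : ℝ :=
  ∑' k, φ k * @inner ℝ _ _ (sigLevel x a s k) (sigLevel y c t k)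

/-- Double Riemann–Stieltjes sum approximating `∫_a^s ∫_c^t F(u,v) ⟨dx_u, dy_v⟩`. -/
def rsSum2 {d : ℕ} (F : ℝ → ℝ → ℝ) (x y : ℝ → Vec d) (a s c t : ℝ) (n : ℕ) : ℝ :=
  ∑ i ∈ Finset.range n, ∑ j ∈ Finset.range n,
    F (a + i * (s - a) / n) (c + j * (t - c) / n) *
      @inner ℝ _ _
        (x (a + (i + 1) * (s - a) / n) - x (a + i * (s - a) / n))
        (y (c + (j + 1) * (t - c) / n) - y (c + j * (t - c) / n))

/-- The element `i₁(v) ∈ T((V))` concentrated in tensor degree one. -/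
def unitVec {d : ℕ} (v : Vec d) : TSeq d :=
  fun k =>
    match k with
    | 1 => WithLp.toLp 2 (fun idx => v (idx 0))
    | _ => 0

/-- `E`-valued Riemann–Stieltjes sums for the controlled integral `∫_a^t Y_u · dx_u`,
where `m : E → V → E` implements right multiplication by degree-one tensors. -/
def rsSumE {d : ℕ} {E : Type*} [NormedAddCommGroup E]
    (m : E → Vec d → E) (Y : ℝ → E) (x : ℝ → Vec d) (a t : ℝ) (n : ℕ) : E :=
  ∑ i ∈ Finset.range n,
    m (Y (a + i * (t - a) / n))
      (x (a + (i + 1) * (t - a) / n) - x (a + i * (t - a) / n))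


namespace SigAux
open Filter Topology Finset


/-- partition point -/
noncomputable def pt (a b : ℝ) (n i : ℕ) : ℝ := a + i * (b - a) / n

/-- right-endpoint Riemann-Stieltjes sum -/
noncomputable def RS (F G : ℝ → ℝ) (a b : ℝ) (n : ℕ) : ℝ :=
  ∑ i ∈ range n, F (pt a b n (i+1)) * (G (pt a b n (i+1)) - G (pt a b n i))

/-- left-endpoint sum, pt form -/
noncomputable def LS (F G : ℝ → ℝ) (a b : ℝ) (n : ℕ) : ℝ :=
  ∑ i ∈ range n, F (pt a b n i) * (G (pt a b n (i+1)) - G (pt a b n i))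

lemma pt_zero (a b : ℝ) (n : ℕ) : pt a b n 0 = a := by simp [pt]

lemma pt_last (a b : ℝ) {n : ℕ} (hn : n ≠ 0) : pt a b n n = b := by
  have : (n : ℝ) ≠ 0 := Nat.cast_ne_zero.mpr hn
  rw [pt, mul_div_cancel_left₀ _ this]; ring

lemma pt_mono {a b : ℝ} (hab : a ≤ b) (n : ℕ) {i j : ℕ} (hij : i ≤ j) :
    pt a b n i ≤ pt a b n j := by
  unfold pt
  have h1 : (i : ℝ) ≤ j := Nat.cast_le.mpr hij
  have h2 : (0:ℝ) ≤ (n:ℝ) := Nat.cast_nonneg n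
  gcongr

lemma pt_mem {a b : ℝ} (hab : a ≤ b) {n i : ℕ} (hn : n ≠ 0) (hi : i ≤ n) :
    pt a b n i ∈ Set.Icc a b := by
  constructor
  · have := pt_mono hab n (Nat.zero_le i)
    rwa [pt_zero] at this
  · have := pt_mono hab n hi
    rwa [pt_last a b hn] at this

lemma pt_step (a b : ℝ) (n i : ℕ) : pt a b n (i+1) - pt a b n i = (b - a) / n := by
  unfold pt
  push_cast
  ring

lemma pt_refine (a b : ℝ) {n m : ℕ} (hn : n ≠ 0) (hm : m ≠ 0) (i : ℕ) :
    pt a b (n*m) (i*m) = pt a b n i := by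
  have h1 : (n : ℝ) ≠ 0 := Nat.cast_ne_zero.mpr hn
  have h2 : (m : ℝ) ≠ 0 := Nat.cast_ne_zero.mpr hm
  unfold pt
  push_cast
  field_simp

lemma rsSum_eq_LS (f g : ℝ → ℝ) (a b : ℝ) (n : ℕ) :
    (∑ i ∈ range n, f (a + i * (b - a) / n) *
      (g (a + (i + 1) * (b - a) / n) - g (a + i * (b - a) / n))) = LS f g a b n := by
  unfold LS pt
  refine Finset.sum_congr rfl fun i _ => ?_
  push_cast
  ring_nf




lemma sum_range_mul' (f : ℕ → ℝ) (n m : ℕ) :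
    ∑ j ∈ range (n*m), f j = ∑ i ∈ range n, ∑ l ∈ range m, f (i*m + l) := by
  induction n with
  | zero => simp
  | succ n ih =>
      rw [Nat.succ_mul, Finset.sum_range_add, ih, Finset.sum_range_succ]

lemma RS_refine {F G : ℝ → ℝ} {a b ε : ℝ} (hab : a ≤ b)
    (hG : MonotoneOn G (Set.Icc a b)) {n m : ℕ} (hn : n ≠ 0) (hm : m ≠ 0)
    (hosc : ∀ s ∈ Set.Icc a b, ∀ t ∈ Set.Icc a b, |s - t| ≤ (b-a)/n → |F s - F t| ≤ ε) :
    |RS F G a b n - RS F G a b (n*m)| ≤ ε * (G b - G a) := by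
  have hnm : n*m ≠ 0 := Nat.mul_ne_zero hn hm
  have key : RS F G a b n - RS F G a b (n*m) =
      ∑ i ∈ range n, ∑ l ∈ range m,
        (F (pt a b n (i+1)) - F (pt a b (n*m) (i*m+l+1))) *
          (G (pt a b (n*m) (i*m+l+1)) - G (pt a b (n*m) (i*m+l))) := by
    rw [RS, RS, sum_range_mul', ← Finset.sum_sub_distrib]
    refine Finset.sum_congr rfl fun i _ => ?_
    have htel : ∑ l ∈ range m,
        (G (pt a b (n*m) (i*m+l+1)) - G (pt a b (n*m) (i*m+l)))
        = G (pt a b n (i+1)) - G (pt a b n i) := by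
      have := Finset.sum_range_sub (fun l => G (pt a b (n*m) (i*m + l))) m
      simp only [← Nat.add_assoc] at this ⊢
      rw [this]
      have e1 : i*m + m = (i+1)*m := by ring
      have e0 : i*m + 0 = i*m := rfl
      rw [e1, pt_refine a b hn hm, e0]
      have e2 : i*m = i*m := rfl
      rw [pt_refine a b hn hm]
    calc F (pt a b n (i+1)) * (G (pt a b n (i+1)) - G (pt a b n i))
          - ∑ l ∈ range m, F (pt a b (n*m) (i*m+l+1)) *
              (G (pt a b (n*m) (i*m+l+1)) - G (pt a b (n*m) (i*m+l)))
        = F (pt a b n (i+1)) * (∑ l ∈ range m,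
            (G (pt a b (n*m) (i*m+l+1)) - G (pt a b (n*m) (i*m+l))))
          - ∑ l ∈ range m, F (pt a b (n*m) (i*m+l+1)) *
              (G (pt a b (n*m) (i*m+l+1)) - G (pt a b (n*m) (i*m+l))) := by rw [htel]
      _ = _ := by rw [Finset.mul_sum, ← Finset.sum_sub_distrib]
                  exact Finset.sum_congr rfl fun l _ => by ring
  rw [key]
  have hbound : ∀ i ∈ range n, ∀ l ∈ range m,
      |(F (pt a b n (i+1)) - F (pt a b (n*m) (i*m+l+1))) *
          (G (pt a b (n*m) (i*m+l+1)) - G (pt a b (n*m) (i*m+l)))|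
        ≤ ε * (G (pt a b (n*m) (i*m+l+1)) - G (pt a b (n*m) (i*m+l))) := by
    intro i hi l hl
    rw [Finset.mem_range] at hi hl
    have hi1 : i + 1 ≤ n := hi
    have hl1 : l + 1 ≤ m := hl
    have hub : i*m + l + 1 ≤ (i+1)*m := by
      have : i*m + l + 1 ≤ i*m + m := by omega
      linarith [this, (by ring : (i+1)*m = i*m + m)]
    have hub2 : (i+1)*m ≤ n*m := Nat.mul_le_mul_right m hi1
    have hmem1 : pt a b (n*m) (i*m+l) ∈ Set.Icc a b :=
      pt_mem hab hnm (by omega)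
    have hmem2 : pt a b (n*m) (i*m+l+1) ∈ Set.Icc a b :=
      pt_mem hab hnm (by omega)
    have hmem3 : pt a b n (i+1) ∈ Set.Icc a b := pt_mem hab hn hi1
    have hΔ : 0 ≤ G (pt a b (n*m) (i*m+l+1)) - G (pt a b (n*m) (i*m+l)) := by
      have := hG hmem1 hmem2 (pt_mono hab (n*m) (by omega))
      linarith
    have hle : pt a b (n*m) (i*m+l+1) ≤ pt a b n (i+1) := by
      have := pt_mono hab (n*m) hub
      rwa [pt_refine a b hn hm] at this
    have hge : pt a b n i ≤ pt a b (n*m) (i*m+l+1) := by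
      have := pt_mono hab (n*m) (Nat.le_succ _ |>.trans (by omega : i*m+l+1 ≤ i*m+l+1))
      have h2 : pt a b (n*m) (i*m) ≤ pt a b (n*m) (i*m+l+1) := pt_mono hab (n*m) (by omega)
      rwa [pt_refine a b hn hm] at h2
    have hdist : |pt a b n (i+1) - pt a b (n*m) (i*m+l+1)| ≤ (b-a)/n := by
      have hstep := pt_step a b n i
      rw [abs_le]
      constructor
      · have h0 : 0 ≤ (b-a)/n := div_nonneg (by linarith) (Nat.cast_nonneg n)
        linarith
      · linarith
    have hF := hosc _ hmem3 _ hmem2 hdist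
    rw [abs_mul, abs_of_nonneg hΔ]
    exact mul_le_mul_of_nonneg_right hF hΔ
  calc |∑ i ∈ range n, ∑ l ∈ range m, _| ≤ ∑ i ∈ range n, |∑ l ∈ range m,
        (F (pt a b n (i+1)) - F (pt a b (n*m) (i*m+l+1))) *
          (G (pt a b (n*m) (i*m+l+1)) - G (pt a b (n*m) (i*m+l)))| :=
        Finset.abs_sum_le_sum_abs _ _
    _ ≤ ∑ i ∈ range n, ∑ l ∈ range m,
        ε * (G (pt a b (n*m) (i*m+l+1)) - G (pt a b (n*m) (i*m+l))) := by
        refine Finset.sum_le_sum fun i hi => ?_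
        exact le_trans (Finset.abs_sum_le_sum_abs _ _)
          (Finset.sum_le_sum fun l hl => hbound i hi l hl)
    _ = ε * (G b - G a) := by
        simp only [← Finset.mul_sum]
        congr 1
        rw [← sum_range_mul' (fun j => G (pt a b (n*m) (j+1)) - G (pt a b (n*m) j)) n m]
        have := Finset.sum_range_sub (fun j => G (pt a b (n*m) j)) (n*m)
        rw [this, pt_last a b hnm, pt_zero]




lemma RS_bound {F G : ℝ → ℝ} {a b M : ℝ} (hab : a ≤ b)
    (hG : MonotoneOn G (Set.Icc a b)) (hM : ∀ t ∈ Set.Icc a b, |F t| ≤ M) (n : ℕ) :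
    |RS F G a b n| ≤ M * (G b - G a) := by
  have haI : a ∈ Set.Icc a b := Set.left_mem_Icc.mpr hab
  have hbI : b ∈ Set.Icc a b := Set.right_mem_Icc.mpr hab
  have hM0 : 0 ≤ M := le_trans (abs_nonneg _) (hM a haI)
  have hV0 : 0 ≤ G b - G a := by have := hG haI hbI hab; linarith
  rcases Nat.eq_zero_or_pos n with hn | hn
  · subst hn; simp [RS]; positivity
  have hn' : n ≠ 0 := Nat.pos_iff_ne_zero.mp hn
  calc |RS F G a b n| ≤ ∑ i ∈ range n, |F (pt a b n (i+1)) *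
        (G (pt a b n (i+1)) - G (pt a b n i))| := Finset.abs_sum_le_sum_abs _ _
    _ ≤ ∑ i ∈ range n, M * (G (pt a b n (i+1)) - G (pt a b n i)) := by
        refine Finset.sum_le_sum fun i hi => ?_
        rw [Finset.mem_range] at hi
        have h1 : pt a b n i ∈ Set.Icc a b := pt_mem hab hn' (by omega)
        have h2 : pt a b n (i+1) ∈ Set.Icc a b := pt_mem hab hn' (by omega)
        have hΔ : 0 ≤ G (pt a b n (i+1)) - G (pt a b n i) := by
          have := hG h1 h2 (pt_mono hab n (by omega)); linarith
        rw [abs_mul, abs_of_nonneg hΔ]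
        exact mul_le_mul_of_nonneg_right (hM _ h2) hΔ
    _ = M * (G b - G a) := by
        rw [← Finset.mul_sum]
        congr 1
        have := Finset.sum_range_sub (fun j => G (pt a b n j)) n
        rw [this, pt_last a b hn', pt_zero]

lemma RS_converges {F G : ℝ → ℝ} {a b : ℝ} (hab : a ≤ b)
    (hF : ContinuousOn F (Set.Icc a b)) (hG : MonotoneOn G (Set.Icc a b)) :
    ∃ J, Tendsto (RS F G a b) atTop (𝓝 J) := by
  refine cauchySeq_tendsto_of_complete ?_
  rw [Metric.cauchySeq_iff']
  intro ε hε
  have haI : a ∈ Set.Icc a b := Set.left_mem_Icc.mpr hab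
  have hbI : b ∈ Set.Icc a b := Set.right_mem_Icc.mpr hab
  set V := G b - G a with hV
  have hV0 : 0 ≤ V := by have := hG haI hbI hab; simp [hV]; linarith
  set ε' := ε / (2 * (V + 1)) with hε'
  have hε'0 : 0 < ε' := by positivity
  have huc := (isCompact_Icc.uniformContinuousOn_of_continuous hF)
  rw [Metric.uniformContinuousOn_iff] at huc
  obtain ⟨δ, hδ0, hδ⟩ := huc ε' hε'0
  set N := max 1 (⌈(b - a) / δ⌉₊ + 1) with hN
  have hN0 : N ≠ 0 := by positivity
  have hNpos : (0:ℝ) < N := by exact_mod_cast Nat.pos_of_ne_zero hN0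
  have hNd : (b - a) / N < δ := by
    have h2 : (b - a) / δ ≤ (⌈(b - a) / δ⌉₊ : ℝ) := Nat.le_ceil _
    have h3 : (⌈(b - a) / δ⌉₊ + 1 : ℕ) ≤ N := le_max_right _ _
    have h4 : ((⌈(b - a) / δ⌉₊ + 1 : ℕ) : ℝ) ≤ N := Nat.cast_le.mpr h3
    push_cast at h4
    have h1 : (b - a) / δ < N := by linarith
    rw [div_lt_iff₀ hδ0] at h1
    rw [div_lt_iff₀ hNpos]
    nlinarith
  have hosc : ∀ k : ℕ, k ≠ 0 → (b - a)/k ≤ (b - a)/N →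
      ∀ s ∈ Set.Icc a b, ∀ t ∈ Set.Icc a b, |s - t| ≤ (b-a)/k → |F s - F t| ≤ ε' := by
    intro k hk hkN s hs t ht hst
    have : dist s t < δ := by
      rw [Real.dist_eq]
      calc |s - t| ≤ (b-a)/k := hst
        _ ≤ (b-a)/N := hkN
        _ < δ := hNd
    have := hδ s hs t ht this
    rw [Real.dist_eq] at this
    exact le_of_lt this
  refine ⟨N, fun n hn => ?_⟩
  have hn0 : n ≠ 0 := by
    have : (1:ℕ) ≤ N := le_max_left _ _
    omega
  have hnN : (N:ℝ) ≤ n := Nat.cast_le.mpr hn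
  have hba : (0:ℝ) ≤ b - a := by linarith
  have hmono : (b - a)/n ≤ (b - a)/N := by gcongr
  have h1 := RS_refine hab hG hn0 hN0 (hosc n hn0 hmono)
  have h2 := RS_refine hab hG hN0 hn0 (hosc N hN0 le_rfl)
  have hcomm : N * n = n * N := Nat.mul_comm N n
  rw [hcomm] at h2
  rw [Real.dist_eq]
  have hkey : 2 * ε' * (V + 1) = ε := by
    rw [hε']
    field_simp
  have hlt : ε' * V + ε' * V < ε := by nlinarith
  calc |RS F G a b n - RS F G a b N|
      ≤ |RS F G a b n - RS F G a b (n*N)| + |RS F G a b N - RS F G a b (n*N)| := by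
        have := abs_sub_le (RS F G a b n) (RS F G a b (n*N)) (RS F G a b N)
        rw [abs_sub_comm (RS F G a b (n*N)) (RS F G a b N)] at this
        exact this
    _ ≤ ε' * V + ε' * V := add_le_add h1 h2
    _ < ε := hlt




lemma pow_sandwich {u v : ℝ} (h0 : 0 ≤ u) (huv : u ≤ v) (k : ℕ) :
    ((k:ℝ)+1) * (u^k * (v - u)) ≤ v^(k+1) - u^(k+1) ∧
      v^(k+1) - u^(k+1) ≤ ((k:ℝ)+1) * (v^k * (v - u)) := by
  have hgeom := geom_sum₂_mul v u (k+1)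
  have hv0 : 0 ≤ v := le_trans h0 huv
  have hterm : ∀ i ∈ Finset.range (k+1), u^k ≤ v ^ i * u ^ (k - i) ∧
      v ^ i * u ^ (k - i) ≤ v^k := by
    intro i hi
    rw [Finset.mem_range] at hi
    have hik : i ≤ k := by omega
    constructor
    · calc u^k = u^i * u^(k-i) := by rw [← pow_add]; congr 1; omega
        _ ≤ v^i * u^(k-i) := by
            exact mul_le_mul_of_nonneg_right (pow_le_pow_left₀ h0 huv i) (pow_nonneg h0 _)
    · calc v^i * u^(k-i) ≤ v^i * v^(k-i) := by
            exact mul_le_mul_of_nonneg_left (pow_le_pow_left₀ h0 huv _) (pow_nonneg hv0 _)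
        _ = v^k := by rw [← pow_add]; congr 1; omega
  have hlo : ((k:ℝ)+1) * u^k ≤ ∑ i ∈ Finset.range (k+1), v ^ i * u ^ (k + 1 - 1 - i) := by
    have := Finset.sum_le_sum (fun i hi => (hterm i hi).1)
    simpa using this
  have hhi : ∑ i ∈ Finset.range (k+1), v ^ i * u ^ (k + 1 - 1 - i) ≤ ((k:ℝ)+1) * v^k := by
    have := Finset.sum_le_sum (fun i hi => (hterm i hi).2)
    simpa using this
  have hvu : 0 ≤ v - u := by linarith
  constructor
  · calc ((k:ℝ)+1) * (u^k * (v-u)) = (((k:ℝ)+1) * u^k) * (v-u) := by ring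
      _ ≤ (∑ i ∈ Finset.range (k+1), v ^ i * u ^ (k + 1 - 1 - i)) * (v-u) :=
          mul_le_mul_of_nonneg_right hlo hvu
      _ = v^(k+1) - u^(k+1) := hgeom
  · calc v^(k+1) - u^(k+1)
        = (∑ i ∈ Finset.range (k+1), v ^ i * u ^ (k + 1 - 1 - i)) * (v-u) := hgeom.symm
      _ ≤ (((k:ℝ)+1) * v^k) * (v-u) := mul_le_mul_of_nonneg_right hhi hvu
      _ = ((k:ℝ)+1) * (v^k * (v-u)) := by ring

lemma exists_mesh {a b δ : ℝ} (hδ : 0 < δ) :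
    ∃ N : ℕ, N ≠ 0 ∧ ∀ n : ℕ, n ≥ N → n ≠ 0 ∧ (b - a)/n < δ := by
  refine ⟨max 1 (⌈(b - a) / δ⌉₊ + 1), by positivity, fun n hn => ?_⟩
  have hn0 : n ≠ 0 := by
    have : (1:ℕ) ≤ max 1 (⌈(b - a) / δ⌉₊ + 1) := le_max_left _ _
    omega
  refine ⟨hn0, ?_⟩
  have hnpos : (0:ℝ) < n := by exact_mod_cast Nat.pos_of_ne_zero hn0
  rcases le_or_gt (b - a) 0 with hba | hba
  · calc (b-a)/n ≤ 0 := div_nonpos_of_nonpos_of_nonneg hba (le_of_lt hnpos)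
      _ < δ := hδ
  · rw [div_lt_iff₀ hnpos]
    have h2 : (b - a) / δ ≤ (⌈(b - a) / δ⌉₊ : ℝ) := Nat.le_ceil _
    have h3 : ⌈(b - a) / δ⌉₊ + 1 ≤ n := le_trans (le_max_right _ _) hn
    have h4 : ((⌈(b - a) / δ⌉₊ + 1 : ℕ) : ℝ) ≤ n := Nat.cast_le.mpr h3
    push_cast at h4
    have h1 : (b - a) / δ < n := by linarith
    rw [div_lt_iff₀ hδ] at h1
    nlinarith




lemma LS_pow_tendsto {e : ℝ → ℝ} {a τ : ℝ} (hab : a ≤ τ)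
    (hmono : MonotoneOn e (Set.Icc a τ)) (hcont : ContinuousOn e (Set.Icc a τ))
    (h0 : ∀ u ∈ Set.Icc a τ, 0 ≤ e u) (k : ℕ) :
    Tendsto (LS (fun u => e u ^ k) e a τ) atTop
      (𝓝 ((e τ ^ (k+1) - e a ^ (k+1)) / ((k:ℝ)+1))) := by
  rw [Metric.tendsto_atTop]
  intro ε hε
  have haI : a ∈ Set.Icc a τ := Set.left_mem_Icc.mpr hab
  have hbI : τ ∈ Set.Icc a τ := Set.right_mem_Icc.mpr hab
  set V := e τ - e a with hV
  have hV0 : 0 ≤ V := by have := hmono haI hbI hab; simp [hV]; linarith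
  set ε' := ε / (2 * (V + 1)) with hε'
  have hε'0 : 0 < ε' := by positivity
  have hFc : ContinuousOn (fun u => e u ^ k) (Set.Icc a τ) := hcont.pow k
  have huc := (isCompact_Icc.uniformContinuousOn_of_continuous hFc)
  rw [Metric.uniformContinuousOn_iff] at huc
  obtain ⟨δ, hδ0, hδ⟩ := huc ε' hε'0
  obtain ⟨N, hN0, hN⟩ := exists_mesh (a := a) (b := τ) hδ0
  refine ⟨N, fun n hn => ?_⟩
  obtain ⟨hn0, hmesh⟩ := hN n hn
  have hptmem : ∀ i : ℕ, i ≤ n → pt a τ n i ∈ Set.Icc a τ := fun i hi => pt_mem hab hn0 hi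
  have hT : (e τ ^ (k+1) - e a ^ (k+1)) / ((k:ℝ)+1)
      = ∑ i ∈ range n, (e (pt a τ n (i+1)) ^ (k+1) - e (pt a τ n i) ^ (k+1)) / ((k:ℝ)+1) := by
    rw [← Finset.sum_div]
    congr 1
    have := Finset.sum_range_sub (fun j => e (pt a τ n j) ^ (k+1)) n
    rw [this, pt_last a τ hn0, pt_zero]
  rw [Real.dist_eq, hT, LS, ← Finset.sum_sub_distrib]
  have hterm : ∀ i ∈ range n,
      |e (pt a τ n i) ^ k * (e (pt a τ n (i+1)) - e (pt a τ n i))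
        - (e (pt a τ n (i+1)) ^ (k+1) - e (pt a τ n i) ^ (k+1)) / ((k:ℝ)+1)|
      ≤ ε' * (e (pt a τ n (i+1)) - e (pt a τ n i)) := by
    intro i hi
    rw [Finset.mem_range] at hi
    have h1 := hptmem i (by omega)
    have h2 := hptmem (i+1) (by omega)
    set u := e (pt a τ n i) with hu
    set v := e (pt a τ n (i+1)) with hv
    have huv : u ≤ v := hmono h1 h2 (pt_mono hab n (by omega))
    have hu0 : 0 ≤ u := h0 _ h1
    obtain ⟨hlo, hhi⟩ := pow_sandwich hu0 huv k
    have hk1 : (0:ℝ) < (k:ℝ)+1 := by positivity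
    have hlo' : u^k * (v - u) ≤ (v^(k+1) - u^(k+1))/((k:ℝ)+1) := by
      rw [le_div_iff₀ hk1]; linarith
    have hhi' : (v^(k+1) - u^(k+1))/((k:ℝ)+1) ≤ v^k * (v - u) := by
      rw [div_le_iff₀ hk1]; linarith
    have hosc : v^k - u^k ≤ ε' := by
      have hd : dist (pt a τ n (i+1)) (pt a τ n i) < δ := by
        rw [Real.dist_eq, pt_step]
        rw [abs_of_nonneg (div_nonneg (by linarith) (Nat.cast_nonneg n))]
        exact hmesh
      have := hδ _ h2 _ h1 hd
      rw [Real.dist_eq] at this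
      calc v^k - u^k ≤ |v^k - u^k| := le_abs_self _
        _ ≤ ε' := le_of_lt this
    rw [abs_le]
    have hvu0 : 0 ≤ v - u := sub_nonneg.mpr huv
    have hp := mul_le_mul_of_nonneg_right hosc hvu0
    constructor
    · nlinarith
    · nlinarith [mul_nonneg hε'0.le hvu0]
  calc |∑ i ∈ range n, (e (pt a τ n i) ^ k * (e (pt a τ n (i+1)) - e (pt a τ n i))
        - (e (pt a τ n (i+1)) ^ (k+1) - e (pt a τ n i) ^ (k+1)) / ((k:ℝ)+1))|
      ≤ ∑ i ∈ range n, |e (pt a τ n i) ^ k * (e (pt a τ n (i+1)) - e (pt a τ n i))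
        - (e (pt a τ n (i+1)) ^ (k+1) - e (pt a τ n i) ^ (k+1)) / ((k:ℝ)+1)| :=
        Finset.abs_sum_le_sum_abs _ _
    _ ≤ ∑ i ∈ range n, ε' * (e (pt a τ n (i+1)) - e (pt a τ n i)) :=
        Finset.sum_le_sum hterm
    _ = ε' * V := by
        rw [← Finset.mul_sum]
        congr 1
        have := Finset.sum_range_sub (fun j => e (pt a τ n j)) n
        rw [this, pt_last a τ hn0, pt_zero]
    _ < ε := by
        have hkey : 2 * ε' * (V + 1) = ε := by rw [hε']; field_simp
        nlinarith




lemma abel_identity (F X : ℝ → ℝ) (a b : ℝ) {n : ℕ} (hn : n ≠ 0) :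
    LS F X a b n = F b * X b - F a * X a - RS X F a b n := by
  have key : LS F X a b n + RS X F a b n
      = ∑ i ∈ range n, (F (pt a b n (i+1)) * X (pt a b n (i+1))
          - F (pt a b n i) * X (pt a b n i)) := by
    rw [LS, RS, ← Finset.sum_add_distrib]
    exact Finset.sum_congr rfl fun i _ => by ring
  have htel := Finset.sum_range_sub (fun j => F (pt a b n j) * X (pt a b n j)) n
  rw [htel, pt_last a b hn, pt_zero] at key
  linarith

lemma LS_congr {f f' g g' : ℝ → ℝ} {a b : ℝ} (hab : a ≤ b)
    (hf : ∀ u ∈ Set.Icc a b, f u = f' u) (hg : ∀ u ∈ Set.Icc a b, g u = g' u) (n : ℕ) :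
    LS f g a b n = LS f' g' a b n := by
  rcases Nat.eq_zero_or_pos n with h | h
  · subst h; simp [LS]
  have hn : n ≠ 0 := by omega
  refine Finset.sum_congr rfl fun i hi => ?_
  rw [Finset.mem_range] at hi
  rw [hf _ (pt_mem hab hn (by omega)), hg _ (pt_mem hab hn (by omega)),
    hg _ (pt_mem hab hn (by omega))]

lemma RS_congr {f f' g g' : ℝ → ℝ} {a b : ℝ} (hab : a ≤ b)
    (hf : ∀ u ∈ Set.Icc a b, f u = f' u) (hg : ∀ u ∈ Set.Icc a b, g u = g' u) (n : ℕ) :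
    RS f g a b n = RS f' g' a b n := by
  rcases Nat.eq_zero_or_pos n with h | h
  · subst h; simp [RS]
  have hn : n ≠ 0 := by omega
  refine Finset.sum_congr rfl fun i hi => ?_
  rw [Finset.mem_range] at hi
  rw [hf _ (pt_mem hab hn (by omega)), hg _ (pt_mem hab hn (by omega)),
    hg _ (pt_mem hab hn (by omega))]

lemma LS_affine (f g : ℝ → ℝ) (c s r : ℝ) (a b : ℝ) (n : ℕ) :
    LS (fun u => c * f u) (fun u => s * g u + r) a b n = (c * s) * LS f g a b n := by
  rw [LS, LS, Finset.mul_sum]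
  exact Finset.sum_congr rfl fun i _ => by ring

lemma LS_smul_left (f g : ℝ → ℝ) (c : ℝ) (a b : ℝ) (n : ℕ) :
    LS (fun u => c * f u) g a b n = c * LS f g a b n := by
  rw [LS, LS, Finset.mul_sum]
  exact Finset.sum_congr rfl fun i _ => by ring

lemma RS_sub_left (f₁ f₂ g : ℝ → ℝ) (a b : ℝ) (n : ℕ) :
    RS (fun u => f₁ u - f₂ u) g a b n = RS f₁ g a b n - RS f₂ g a b n := by
  rw [RS, RS, RS, ← Finset.sum_sub_distrib]
  exact Finset.sum_congr rfl fun i _ => by ring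

lemma RS_neg_left (f g : ℝ → ℝ) (a b : ℝ) (n : ℕ) :
    RS (fun u => -(f u)) g a b n = -RS f g a b n := by
  rw [RS, RS, ← Finset.sum_neg_distrib]
  exact Finset.sum_congr rfl fun i _ => by ring

lemma RS_comb (F G₁ G₂ G₃ : ℝ → ℝ) (c : ℝ) (a b : ℝ) (n : ℕ) :
    RS F (fun t => G₁ t - G₂ t + c * G₃ t) a b n
      = RS F G₁ a b n - RS F G₂ a b n + c * RS F G₃ a b n := by
  simp only [RS, Finset.mul_sum, ← Finset.sum_sub_distrib, ← Finset.sum_add_distrib]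
  exact Finset.sum_congr rfl fun i _ => by ring

lemma RS_sum_comb (F : ℝ → ℝ) (G : ℕ → ℝ → ℝ) (c : ℕ → ℝ) (K : ℕ) (a b : ℝ) (n : ℕ) :
    RS F (fun t => ∑ k ∈ range K, c k * G k t) a b n
      = ∑ k ∈ range K, c k * RS F (G k) a b n := by
  rw [RS]
  calc ∑ i ∈ range n, F (pt a b n (i+1)) *
        ((∑ k ∈ range K, c k * G k (pt a b n (i+1))) - ∑ k ∈ range K, c k * G k (pt a b n i))
      = ∑ i ∈ range n, ∑ k ∈ range K,
          c k * (F (pt a b n (i+1)) * (G k (pt a b n (i+1)) - G k (pt a b n i))) := by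
        refine Finset.sum_congr rfl fun i _ => ?_
        rw [← Finset.sum_sub_distrib, Finset.mul_sum]
        refine Finset.sum_congr rfl fun k _ => by ring
    _ = ∑ k ∈ range K, c k * RS F (G k) a b n := by
        rw [Finset.sum_comm]
        refine Finset.sum_congr rfl fun k _ => ?_
        rw [RS, Finset.mul_sum]




lemma rsSum_eq_LS' (f g : ℝ → ℝ) (a b : ℝ) (n : ℕ) :
    rsSum f g a b n = LS f g a b n := by
  rw [rsSum]
  exact rsSum_eq_LS f g a b n

lemma sigWord_replicate {d : ℕ} {x : ℝ → Vec d} {a b : ℝ} {i0 : Fin d} {e : ℝ → ℝ} {s : ℝ}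
    (hab : a ≤ b) (hs : s = 1 ∨ s = -1)
    (hmono : MonotoneOn e (Set.Icc a b)) (hcont : ContinuousOn e (Set.Icc a b))
    (he0 : e a = 0)
    (hcoord : ∀ u ∈ Set.Icc a b, x u i0 = s * e u + x a i0) (k : ℕ) :
    ∀ t ∈ Set.Icc a b,
      sigWord x a (List.replicate k i0) t = s^k * (e t)^k / (k.factorial : ℝ) := by
  induction k with
  | zero => intro t ht; simp [sigWord]
  | succ k ih =>
      intro t ht
      have hat : a ≤ t := ht.1
      have htb : t ≤ b := ht.2
      have hsub : Set.Icc a t ⊆ Set.Icc a b := Set.Icc_subset_Icc le_rfl htb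
      have hmono' : MonotoneOn e (Set.Icc a t) := hmono.mono hsub
      have hcont' : ContinuousOn e (Set.Icc a t) := hcont.mono hsub
      have h0' : ∀ u ∈ Set.Icc a t, 0 ≤ e u := by
        intro u hu
        have := hmono' (Set.left_mem_Icc.mpr hat) hu hu.1
        rwa [he0] at this
      rw [List.replicate_succ]
      show rsInt (fun u => sigWord x a (List.replicate k i0) u) (fun u => x u i0) a t
        = s^(k+1) * (e t)^(k+1) / ((k+1).factorial : ℝ)
      have hfac : (0:ℝ) < (k.factorial : ℝ) := by exact_mod_cast k.factorial_pos
      have hseq : ∀ n : ℕ, rsSum (fun u => sigWord x a (List.replicate k i0) u)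
          (fun u => x u i0) a t n
          = (s^k / (k.factorial : ℝ) * s) * LS (fun u => e u ^ k) e a t n := by
        intro n
        rw [rsSum_eq_LS']
        have h1 : LS (fun u => sigWord x a (List.replicate k i0) u) (fun u => x u i0) a t n
            = LS (fun u => (s^k / (k.factorial : ℝ)) * e u ^ k)
                (fun u => s * e u + x a i0) a t n := by
          refine LS_congr hat (fun u hu => ?_) (fun u hu => hcoord u (hsub hu)) n
          rw [ih u (hsub hu)]
          ring
        rw [h1, LS_affine]
      have htend : Tendsto (rsSum (fun u => sigWord x a (List.replicate k i0) u)
          (fun u => x u i0) a t) atTop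
          (𝓝 (s^(k+1) * (e t)^(k+1) / ((k+1).factorial : ℝ))) := by
        have h2 := (LS_pow_tendsto hat hmono' hcont' h0' k).const_mul
          (s^k / (k.factorial : ℝ) * s)
        have h3 : (s^k / (k.factorial : ℝ) * s) * ((e t ^ (k+1) - e a ^ (k+1)) / ((k:ℝ)+1))
            = s^(k+1) * (e t)^(k+1) / ((k+1).factorial : ℝ) := by
          rw [he0, Nat.factorial_succ]
          push_cast
          have hk1 : ((k:ℝ)+1) ≠ 0 := by positivity
          field_simp
          ring
        rw [h3] at h2
        exact h2.congr fun n => (hseq n).symm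
      exact htend.limUnder_eq



lemma pow_monoOn {e : ℝ → ℝ} {a b : ℝ} (hmono : MonotoneOn e (Set.Icc a b))
    (h0 : ∀ u ∈ Set.Icc a b, 0 ≤ e u) (k : ℕ) :
    MonotoneOn (fun t => e t ^ k) (Set.Icc a b) :=
  fun s hs t ht hst => pow_le_pow_left₀ (h0 s hs) (hmono hs ht hst) k

lemma sigWord_cons_eval {d : ℕ} {x : ℝ → Vec d} {a b : ℝ} {i0 : Fin d} {e : ℝ → ℝ} {s : ℝ}
    (hab : a ≤ b) (hs : s = 1 ∨ s = -1)
    (hmono : MonotoneOn e (Set.Icc a b)) (hcont : ContinuousOn e (Set.Icc a b))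
    (he0 : e a = 0)
    (hcoord : ∀ u ∈ Set.Icc a b, x u i0 = s * e u + x a i0)
    (j : Fin d) (k : ℕ) {J : ℝ}
    (hJ : Tendsto (RS (fun u => x u j) (fun u => e u ^ k) a b) atTop (𝓝 J)) :
    sigWord x a (j :: List.replicate k i0) b
      = s^k / (k.factorial : ℝ) * (e b ^ k * x b j - e a ^ k * x a j - J) := by
  show rsInt (fun u => sigWord x a (List.replicate k i0) u) (fun u => x u j) a b = _
  have hrepl := sigWord_replicate hab hs hmono hcont he0 hcoord k
  have heq : ∀ n : ℕ, n ≠ 0 → rsSum (fun u => sigWord x a (List.replicate k i0) u)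
      (fun u => x u j) a b n
      = s^k / (k.factorial : ℝ) *
          (e b ^ k * x b j - e a ^ k * x a j - RS (fun u => x u j) (fun u => e u ^ k) a b n) := by
    intro n hn
    rw [rsSum_eq_LS']
    have h1 : LS (fun u => sigWord x a (List.replicate k i0) u) (fun u => x u j) a b n
        = LS (fun u => (s^k / (k.factorial : ℝ)) * e u ^ k) (fun u => x u j) a b n := by
      refine LS_congr hab (fun u hu => ?_) (fun u _ => rfl) n
      rw [hrepl u hu]; ring
    rw [h1, LS_smul_left, abel_identity (fun u => e u ^ k) (fun u => x u j) a b hn]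
  have htend : Tendsto (rsSum (fun u => sigWord x a (List.replicate k i0) u)
      (fun u => x u j) a b) atTop
      (𝓝 (s^k / (k.factorial : ℝ) * (e b ^ k * x b j - e a ^ k * x a j - J))) := by
    have h2 : Tendsto (fun n => s^k / (k.factorial : ℝ) *
        (e b ^ k * x b j - e a ^ k * x a j - RS (fun u => x u j) (fun u => e u ^ k) a b n))
        atTop (𝓝 (s^k / (k.factorial : ℝ) * (e b ^ k * x b j - e a ^ k * x a j - J))) :=
      (((tendsto_const_nhds (x := e b ^ k * x b j - e a ^ k * x a j)).sub hJ).const_mul _)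
    refine h2.congr' ?_
    filter_upwards [eventually_ge_atTop 1] with n hn
    exact (heq n (by omega)).symm
  exact htend.limUnder_eq



set_option maxHeartbeats 1000000 in
lemma propP {h e : ℝ → ℝ} {a b : ℝ} (hab : a < b)
    (hh : ContinuousOn h (Set.Icc a b))
    (hec : ContinuousOn e (Set.Icc a b)) (hes : StrictMonoOn e (Set.Icc a b))
    (hRS : ∀ k : ℕ, Tendsto (RS h (fun t => e t ^ k) a b) atTop (𝓝 0)) :
    ∀ t ∈ Set.Icc a b, h t ≤ 0 := by
  by_contra hcon
  push_neg at hcon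
  obtain ⟨t₀, ht₀I, ht₀⟩ := hcon
  set c := h t₀ / 2 with hcdef
  have hc0 : 0 < c := by simp [hcdef]; linarith
  -- find a window around t₀ where h > c
  have hcw : ContinuousWithinAt h (Set.Icc a b) t₀ := hh t₀ ht₀I
  rw [Metric.continuousWithinAt_iff] at hcw
  obtain ⟨δ, hδ0, hδ⟩ := hcw c hc0
  set t₁ := max a (t₀ - δ/2) with ht₁def
  set t₂' := min b (t₀ + δ/2) with ht₂'def
  have ht₁I : t₁ ∈ Set.Icc a b :=
    ⟨le_max_left _ _, max_le (le_of_lt hab) (by linarith [ht₀I.2])⟩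
  have ht₂'I : t₂' ∈ Set.Icc a b :=
    ⟨le_min (le_of_lt hab) (by linarith [ht₀I.1]), min_le_left _ _⟩
  have ht₁₂ : t₁ < t₂' := by
    apply max_lt <;> apply lt_min
    · exact hab
    · linarith [ht₀I.1]
    · linarith [ht₀I.2]
    · linarith
  have hwin : ∀ s ∈ Set.Icc t₁ t₂', c < h s := by
    intro s hs
    have hsI : s ∈ Set.Icc a b :=
      ⟨le_trans ht₁I.1 hs.1, le_trans hs.2 ht₂'I.2⟩
    have hd : dist s t₀ < δ := by
      rw [Real.dist_eq, abs_lt]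
      constructor
      · have : t₀ - δ/2 ≤ t₁ := le_max_right _ _
        have := hs.1
        linarith
      · have : t₂' ≤ t₀ + δ/2 := min_le_right _ _
        have := hs.2
        linarith
    have := hδ hsI hd
    rw [Real.dist_eq, abs_lt] at this
    have := this.1
    simp only [hcdef] at *
    linarith
  set t₂ := (t₁ + t₂')/2 with ht₂def
  have ht₁₂' : t₁ < t₂ := by simp [ht₂def]; linarith
  have ht₂₂' : t₂ < t₂' := by simp [ht₂def]; linarith
  have ht₂I : t₂ ∈ Set.Icc a b := ⟨le_trans ht₁I.1 (le_of_lt ht₁₂'),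
    le_trans (le_of_lt ht₂₂') ht₂'I.2⟩
  have haI : a ∈ Set.Icc a b := Set.left_mem_Icc.mpr hab.le
  have hbI : b ∈ Set.Icc a b := Set.right_mem_Icc.mpr hab.le
  set m := e a with hm
  set M := e b with hM
  set u₁ := e t₁ with hu₁
  set u₂ := e t₂ with hu₂
  have emono : MonotoneOn e (Set.Icc a b) := hes.monotoneOn
  have hmM : m < M := hes haI hbI hab
  have hmu₁ : m ≤ u₁ := emono haI ht₁I ht₁I.1
  have hu₁₂ : u₁ < u₂ := hes ht₁I ht₂I ht₁₂'
  have hu₂M : u₂ ≤ M := emono ht₂I hbI ht₂I.2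
  -- the bump function and its primitive
  set r := fun v => max 0 ((v - u₁) * (u₂ - v)) with hrdef
  have hrc : Continuous r := continuous_const.max (by continuity)
  have hr0 : ∀ v, 0 ≤ r v := fun v => le_max_left _ _
  have hrz : ∀ v, (v ≤ u₁ ∨ u₂ ≤ v) → r v = 0 := by
    intro v hv
    rw [hrdef]
    rcases hv with hv | hv
    · exact max_eq_left (mul_nonpos_of_nonpos_of_nonneg (by linarith) (by linarith))
    · exact max_eq_left (mul_nonpos_of_nonneg_of_nonpos (by linarith) (by linarith))
  set gb := fun w => ∫ v in m..w, r v with hgbdef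
  have hgder : ∀ w, HasDerivAt gb (r w) w := fun w =>
    intervalIntegral.integral_hasDerivAt_right (hrc.intervalIntegrable _ _)
      (hrc.stronglyMeasurableAtFilter _ _) hrc.continuousAt
  have hgint : ∀ w₁ w₂ : ℝ, w₁ ≤ w₂ → gb w₂ - gb w₁ = ∫ v in w₁..w₂, r v := by
    intro w₁ w₂ _
    have := intervalIntegral.integral_add_adjacent_intervals
      (μ := MeasureTheory.volume)
      (hrc.intervalIntegrable m w₁) (hrc.intervalIntegrable w₁ w₂)
    simp only [hgbdef]
    linarith
  have hgmono : Monotone gb := by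
    intro w₁ w₂ hw
    have h1 := hgint w₁ w₂ hw
    have h2 : 0 ≤ ∫ v in w₁..w₂, r v :=
      intervalIntegral.integral_nonneg hw (fun v _ => hr0 v)
    linarith
  have hflat : ∀ w₁ w₂ : ℝ, w₁ ≤ w₂ → (w₂ ≤ u₁ ∨ u₂ ≤ w₁) → gb w₁ = gb w₂ := by
    intro w₁ w₂ hw hcase
    have h1 := hgint w₁ w₂ hw
    have h2 : ∫ v in w₁..w₂, r v = 0 := by
      rw [intervalIntegral.integral_congr (g := fun _ => (0:ℝ)) ?_,
        intervalIntegral.integral_zero]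
      intro v hv
      rw [Set.uIcc_of_le hw] at hv
      refine hrz v ?_
      rcases hcase with hc1 | hc1
      · exact Or.inl (le_trans hv.2 hc1)
      · exact Or.inr (le_trans hc1 hv.1)
    linarith
  set I0 := ∫ v in u₁..u₂, r v with hI0def
  have hI0 : 0 < I0 := by
    refine intervalIntegral.intervalIntegral_pos_of_pos_on
      (hrc.intervalIntegrable _ _) ?_ hu₁₂
    intro v hv
    have hp : 0 < (v - u₁) * (u₂ - v) := mul_pos (by linarith [hv.1]) (by linarith [hv.2])
    simp only [hrdef]
    rw [max_eq_right hp.le]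
    exact hp
  have hGba : gb M - gb m = I0 := by
    have e1 : gb u₁ = gb m := (hflat m u₁ hmu₁ (Or.inl le_rfl)).symm
    have e2 : gb u₂ - gb u₁ = I0 := hgint u₁ u₂ hu₁₂.le
    have e3 : gb M = gb u₂ := (hflat u₂ M hu₂M (Or.inr le_rfl)).symm
    linarith
  set G := fun t => gb (e t) with hGdef
  have hGmono : MonotoneOn G (Set.Icc a b) := fun s hs t ht hst =>
    hgmono (emono hs ht hst)
  obtain ⟨J, hJ⟩ := RS_converges hab.le hh hGmono
  obtain ⟨C, hC⟩ := isCompact_Icc.exists_bound_of_continuousOn hh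
  have hC' : ∀ t ∈ Set.Icc a b, |h t| ≤ C := fun t ht => hC t ht
  have hC0 : 0 ≤ C := le_trans (abs_nonneg _) (hC' a haI)
  -- lower bound for J
  have hlow : c * I0 ≤ J := by
    obtain ⟨N₁, hN₁0, hN₁⟩ := exists_mesh (a := a) (b := b) (δ := t₂' - t₂) (by linarith)
    refine ge_of_tendsto hJ ?_
    filter_upwards [eventually_ge_atTop N₁] with n hn
    obtain ⟨hn0, hmesh⟩ := hN₁ n hn
    have hterm : ∀ i ∈ range n,
        c * (G (pt a b n (i+1)) - G (pt a b n i)) ≤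
          h (pt a b n (i+1)) * (G (pt a b n (i+1)) - G (pt a b n i)) := by
      intro i hi
      rw [Finset.mem_range] at hi
      have hp1 : pt a b n i ∈ Set.Icc a b := pt_mem hab.le hn0 (by omega)
      have hp2 : pt a b n (i+1) ∈ Set.Icc a b := pt_mem hab.le hn0 (by omega)
      have hple : pt a b n i ≤ pt a b n (i+1) := pt_mono hab.le n (by omega)
      have hΔ : 0 ≤ G (pt a b n (i+1)) - G (pt a b n i) := by
        have := hGmono hp1 hp2 hple
        linarith
      rcases eq_or_lt_of_le hΔ with hΔ0 | hΔ0
      · rw [← hΔ0]; ring_nf; rfl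
      · have hee : e (pt a b n i) ≤ e (pt a b n (i+1)) := emono hp1 hp2 hple
        have hne : gb (e (pt a b n i)) ≠ gb (e (pt a b n (i+1))) := by
          intro hcontra
          simp only [hGdef] at hΔ0
          linarith
        have h1 : u₁ < e (pt a b n (i+1)) := by
          by_contra hcontra
          push_neg at hcontra
          exact hne (hflat _ _ hee (Or.inl hcontra))
        have h2 : e (pt a b n i) < u₂ := by
          by_contra hcontra
          push_neg at hcontra
          exact hne (hflat _ _ hee (Or.inr hcontra))
        have h3 : t₁ < pt a b n (i+1) := by
          by_contra hcontra
          push_neg at hcontra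
          exact absurd (emono hp2 ht₁I hcontra) (by linarith)
        have h4 : pt a b n i < t₂ := by
          by_contra hcontra
          push_neg at hcontra
          exact absurd (emono ht₂I hp1 hcontra) (by linarith)
        have h5 : pt a b n (i+1) ≤ t₂' := by
          have hst := pt_step a b n i
          linarith [hmesh, h4]
        have hhc : c < h (pt a b n (i+1)) := hwin _ ⟨h3.le, h5⟩
        exact mul_le_mul_of_nonneg_right hhc.le hΔ
    calc c * I0 = c * (G b - G a) := by
          simp only [hGdef, ← hm, ← hM]
          rw [hGba]
      _ = ∑ i ∈ range n, c * (G (pt a b n (i+1)) - G (pt a b n i)) := by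
          rw [← Finset.mul_sum]
          congr 1
          have := Finset.sum_range_sub (fun j => G (pt a b n j)) n
          rw [this, pt_last a b hn0, pt_zero]
      _ ≤ RS h G a b n := Finset.sum_le_sum hterm
  -- upper bound for J
  have hup : ∀ ε : ℝ, 0 < ε → J ≤ 3 * ε * C * (M - m) := by
    intro ε hε
    obtain ⟨p, hp⟩ := exists_polynomial_near_of_continuousOn m M r hrc.continuousOn ε hε
    set K := p.natDegree + 1 with hKdef
    set q := fun v : ℝ => ∑ k ∈ range K, (p.coeff k / ((k:ℝ)+1)) * v^(k+1) with hqdef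
    have hqder : ∀ v, HasDerivAt q (p.eval v) v := by
      intro v
      have h1 : HasDerivAt q (∑ k ∈ range K, p.coeff k * v^k) v := by
        refine HasDerivAt.fun_sum fun k _ => ?_
        have h2 : HasDerivAt (fun v : ℝ => (p.coeff k / ((k:ℝ)+1)) * v^(k+1))
            ((p.coeff k / ((k:ℝ)+1)) * (((k:ℝ)+1) * v^k)) v := by
          simpa using (hasDerivAt_pow (k+1) v).const_mul (p.coeff k / ((k:ℝ)+1))
        have h3 : (p.coeff k / ((k:ℝ)+1)) * (((k:ℝ)+1) * v^k) = p.coeff k * v^k := by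
          have : ((k:ℝ)+1) ≠ 0 := by positivity
          field_simp
        rwa [h3] at h2
      rwa [← Polynomial.eval_eq_sum_range] at h1
    set A := fun v : ℝ => q v - gb v + ε * v with hAdef
    have hAder : ∀ v, HasDerivAt A (p.eval v - r v + ε) v := fun v =>
      ((hqder v).sub (hgder v)).add ((hasDerivAt_id v).const_mul ε |>.congr_deriv (by ring))
    have hAmono : MonotoneOn A (Set.Icc m M) := by
      refine monotoneOn_of_deriv_nonneg (convex_Icc m M)
        (fun v _ => ((hAder v).continuousAt.continuousWithinAt)) ?_ ?_
      · exact fun v _ => ((hAder v).differentiableAt).differentiableWithinAt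
      · intro v hv
        rw [(hAder v).deriv]
        rw [interior_Icc] at hv
        have := hp v ⟨hv.1.le, hv.2.le⟩
        have habs := abs_lt.mp this
        linarith [habs.1]
    have hAvar : A M - A m ≤ 2 * ε * (M - m) := by
      have h1 : ∫ v in m..M, (p.eval v - r v + ε) = A M - A m := by
        refine intervalIntegral.integral_eq_sub_of_hasDerivAt
          (fun v _ => hAder v) ?_
        exact ((p.continuous_aeval.sub hrc).add continuous_const).intervalIntegrable _ _
      have h2 : ∫ v in m..M, (p.eval v - r v + ε) ≤ ∫ v in m..M, 2 * ε := by
        refine intervalIntegral.integral_mono_on hmM.le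
          (((p.continuous_aeval.sub hrc).add continuous_const).intervalIntegrable _ _)
          (continuous_const.intervalIntegrable _ _) ?_
        intro v hv
        have := abs_lt.mp (hp v hv)
        linarith [this.2]
      rw [intervalIntegral.integral_const] at h2
      have : (M - m) • (2 * ε) = 2 * ε * (M - m) := by
        rw [smul_eq_mul]; ring
      linarith [h1, h2, this ▸ h2]
    have hdecomp : ∀ t, G t = q (e t) - A (e t) + ε * e t := by
      intro t
      simp only [hGdef, hAdef]
      ring
    have hsplit : ∀ n, RS h G a b n
        = RS h (fun t => q (e t)) a b n - RS h (fun t => A (e t)) a b n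
          + ε * RS h e a b n := by
      intro n
      rw [RS_congr hab.le (fun u _ => rfl) (fun u _ => hdecomp u) n, RS_comb]
    have hq0 : Tendsto (fun n => RS h (fun t => q (e t)) a b n) atTop (𝓝 0) := by
      have h1 : ∀ n, RS h (fun t => q (e t)) a b n
          = ∑ k ∈ range K, (p.coeff k / ((k:ℝ)+1)) * RS h (fun t => e t ^ (k+1)) a b n := by
        intro n
        rw [← RS_sum_comb h (fun k t => e t ^ (k+1)) (fun k => p.coeff k / ((k:ℝ)+1)) K a b n]
      have h2 : Tendsto (fun n => ∑ k ∈ range K,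
          (p.coeff k / ((k:ℝ)+1)) * RS h (fun t => e t ^ (k+1)) a b n) atTop (𝓝 0) := by
        have h3 := tendsto_finset_sum (range K)
          (fun k (_ : k ∈ range K) => (hRS (k+1)).const_mul (p.coeff k / ((k:ℝ)+1)))
        simpa using h3
      exact h2.congr fun n => (h1 n).symm
    have hAe : MonotoneOn (fun t => A (e t)) (Set.Icc a b) := by
      intro s hs t ht hst
      exact hAmono ⟨emono haI hs hs.1, emono hs hbI hs.2⟩
        ⟨emono haI ht ht.1, emono ht hbI ht.2⟩ (emono hs ht hst)
    have hbound1 : ∀ n, |RS h (fun t => A (e t)) a b n| ≤ C * (A M - A m) :=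
      fun n => RS_bound hab.le hAe hC' n
    have hbound2 : ∀ n, |RS h e a b n| ≤ C * (M - m) :=
      fun n => RS_bound hab.le emono hC' n
    have hptwise : ∀ n, RS h G a b n
        ≤ RS h (fun t => q (e t)) a b n + 3 * ε * C * (M - m) := by
      intro n
      have h1 := (abs_le.mp (hbound1 n)).1
      have h2 := (abs_le.mp (hbound2 n)).2
      have h3 := (abs_le.mp (hbound2 n)).1
      have h4 : C * (A M - A m) ≤ C * (2 * ε * (M - m)) :=
        mul_le_mul_of_nonneg_left hAvar hC0
      rw [hsplit n]
      have h5 : ε * RS h e a b n ≤ ε * (C * (M - m)) :=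
        mul_le_mul_of_nonneg_left h2 hε.le
      nlinarith [hbound1 n, abs_le.mp (hbound1 n)]
    refine le_of_tendsto_of_tendsto' hJ ?_ hptwise
    have := hq0.add (tendsto_const_nhds (x := 3 * ε * C * (M - m)))
    simpa using this
  -- contradiction
  have hB : 0 ≤ 3 * C * (M - m) := by nlinarith [hC0, hmM]
  set B := 3 * C * (M - m) with hBdef
  have hfin : c * I0 ≤ (c * I0 / (B + 1)) * B := by
    have hε : 0 < c * I0 / (B + 1) := div_pos (mul_pos hc0 hI0) (by linarith)
    have := hup _ hε
    calc c * I0 ≤ J := hlow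
      _ ≤ 3 * (c * I0 / (B + 1)) * C * (M - m) := this
      _ = (c * I0 / (B + 1)) * B := by rw [hBdef]; ring
  have hcI : 0 < c * I0 := mul_pos hc0 hI0
  have : (c * I0 / (B + 1)) * B < c * I0 := by
    rw [div_mul_eq_mul_div, div_lt_iff₀ (by linarith : (0:ℝ) < B + 1)]
    nlinarith
  linarith




lemma RS_pow_zero (F e : ℝ → ℝ) (a b : ℝ) (n : ℕ) :
    RS F (fun u => e u ^ 0) a b n = 0 := by
  simp [RS]

lemma sigWord_congr {d : ℕ} {x y : ℝ → Vec d} {a b : ℝ} (hab : a ≤ b)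
    (heq : Set.EqOn x y (Set.Icc a b)) :
    ∀ (w : List (Fin d)), ∀ t ∈ Set.Icc a b, sigWord x a w t = sigWord y a w t := by
  intro w
  induction w with
  | nil => intro t _; rfl
  | cons i w ih =>
      intro t ht
      show rsInt (fun u => sigWord x a w u) (fun u => x u i) a t
        = rsInt (fun u => sigWord y a w u) (fun u => y u i) a t
      rw [rsInt, rsInt]
      congr 1
      funext n
      rw [rsSum_eq_LS', rsSum_eq_LS']
      have hsub : Set.Icc a t ⊆ Set.Icc a b := Set.Icc_subset_Icc le_rfl ht.2
      exact LS_congr ht.1 (fun u hu => ih u (hsub hu))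
        (fun u hu => by rw [heq (hsub hu)]) n

lemma signature_eq_of_eqOn {d : ℕ} {x y : ℝ → Vec d} {a b : ℝ} (hab : a ≤ b)
    (heq : Set.EqOn x y (Set.Icc a b)) : signatureT x a b = signatureT y a b := by
  funext k
  ext idx
  exact sigWord_congr hab heq _ b (Set.right_mem_Icc.mpr hab)

lemma sigWord_of_signature_eq {d : ℕ} {x y : ℝ → Vec d} {a b : ℝ}
    (hsig : signatureT x a b = signatureT y a b) (w : List (Fin d)) :
    sigWord x a w b = sigWord y a w b := by
  have h1 := congrFun hsig w.reverse.length
  have h2 := congrArg (fun v => v w.reverse.get) h1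
  simp only [signatureT, sigLevel, PiLp.toLp_apply, List.ofFn_get, List.reverse_reverse] at h2
  exact h2


end SigAux

open SigAux

/-- Injectivity of the signature for paths with a common strictly
monotone coordinate. If `x, y ∈ C_p([a,b],V)` (`1 ≤ p < 2`) have, in coordinates,
a common strictly monotone coordinate `x^{i₀} = y^{i₀} = ρ`, and `x_a = y_a`, then
`S(x)_{[a,b]} = S(y)_{[a,b]}` iff `x = y` on `[a,b]`. -/
theorem signature_injective_monotone_coordinate {d : ℕ} (p a b : ℝ)
    (hp1 : 1 ≤ p) (hp2 : p < 2) (hab : a ≤ b)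
    (x y : ℝ → Vec d) (hx : MemCp x p a b) (hy : MemCp y p a b)
    (i0 : Fin d) (ρ : ℝ → ℝ)
    (hρ : StrictMonoOn ρ (Set.Icc a b) ∨ StrictAntiOn ρ (Set.Icc a b))
    (hxc : ∀ t ∈ Set.Icc a b, x t i0 = ρ t)
    (hyc : ∀ t ∈ Set.Icc a b, y t i0 = ρ t)
    (hstart : x a = y a) :
    signatureT x a b = signatureT y a b ↔ Set.EqOn x y (Set.Icc a b) := by
  constructor
  · intro hsig
    rcases eq_or_lt_of_le hab with rfl | hab'
    · intro t ht
      have : t = a := le_antisymm ht.2 ht.1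
      rw [this]
      exact hstart
    -- coordinate continuity
    have hxj : ∀ j : Fin d, ContinuousOn (fun u => x u j) (Set.Icc a b) :=
      fun j => (EuclideanSpace.proj j).continuous.comp_continuousOn hx.1
    have hyj : ∀ j : Fin d, ContinuousOn (fun u => y u j) (Set.Icc a b) :=
      fun j => (EuclideanSpace.proj j).continuous.comp_continuousOn hy.1
    have haI : a ∈ Set.Icc a b := Set.left_mem_Icc.mpr hab
    have hρcont : ContinuousOn ρ (Set.Icc a b) :=
      (hxj i0).congr (fun t ht => (hxc t ht).symm)
    -- normalized strictly increasing coordinate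
    obtain ⟨s, e, hs, hesm, hecont, he0, hxcoord, hycoord⟩ :
        ∃ (s : ℝ) (e : ℝ → ℝ), (s = 1 ∨ s = -1) ∧ StrictMonoOn e (Set.Icc a b) ∧
          ContinuousOn e (Set.Icc a b) ∧ e a = 0 ∧
          (∀ u ∈ Set.Icc a b, x u i0 = s * e u + x a i0) ∧
          (∀ u ∈ Set.Icc a b, y u i0 = s * e u + y a i0) := by
      have hρa : ρ a = x a i0 := (hxc a haI).symm
      have hρa' : ρ a = y a i0 := (hyc a haI).symm
      rcases hρ with hinc | hdec
      · refine ⟨1, fun t => ρ t - ρ a, Or.inl rfl, ?_, hρcont.sub continuousOn_const,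
          by ring, ?_, ?_⟩
        · intro u hu v hv huv
          have := hinc hu hv huv
          simp only
          linarith
        · intro u hu; rw [hxc u hu, ← hρa]; ring
        · intro u hu; rw [hyc u hu, ← hρa']; ring
      · refine ⟨-1, fun t => ρ a - ρ t, Or.inr rfl, ?_, continuousOn_const.sub hρcont,
          by ring, ?_, ?_⟩
        · intro u hu v hv huv
          have := hdec hu hv huv
          simp only
          linarith
        · intro u hu; rw [hxc u hu, ← hρa]; ring
        · intro u hu; rw [hyc u hu, ← hρa']; ring
    have hemono : MonotoneOn e (Set.Icc a b) := hesm.monotoneOn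
    have henn : ∀ u ∈ Set.Icc a b, 0 ≤ e u := by
      intro u hu
      have := hemono haI hu hu.1
      rwa [he0] at this
    have hword := sigWord_of_signature_eq hsig
    have hs0 : s ≠ 0 := by rcases hs with rfl | rfl <;> norm_num
    -- limits of the RS sums
    have hJx : ∀ (j : Fin d) (k : ℕ), ∃ J,
        Tendsto (RS (fun u => x u j) (fun u => e u ^ k) a b) atTop (𝓝 J) :=
      fun j k => RS_converges hab (hxj j) (pow_monoOn hemono henn k)
    have hJy : ∀ (j : Fin d) (k : ℕ), ∃ J,
        Tendsto (RS (fun u => y u j) (fun u => e u ^ k) a b) atTop (𝓝 J) :=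
      fun j k => RS_converges hab (hyj j) (pow_monoOn hemono henn k)
    -- endpoint equality from level-one words
    have hend : ∀ j : Fin d, x b j = y b j := by
      intro j
      have hz : Tendsto (RS (fun u => x u j) (fun u => e u ^ 0) a b) atTop (𝓝 0) :=
        tendsto_const_nhds.congr fun n => (RS_pow_zero (fun u => x u j) e a b n).symm
      have hz' : Tendsto (RS (fun u => y u j) (fun u => e u ^ 0) a b) atTop (𝓝 0) :=
        tendsto_const_nhds.congr fun n => (RS_pow_zero (fun u => y u j) e a b n).symm
      have hx1 := sigWord_cons_eval hab hs hemono hecont he0 hxcoord j 0 hz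
      have hy1 := sigWord_cons_eval hab hs hemono hecont he0 hycoord j 0 hz'
      have hw := hword (j :: List.replicate 0 i0)
      rw [hx1, hy1] at hw
      have hcoef : s^0 / ((Nat.factorial 0 : ℕ) : ℝ) ≠ 0 := by norm_num
      have hw2 := mul_left_cancel₀ hcoef hw
      simp only [pow_zero, one_mul] at hw2
      have hsa : x a j = y a j := congrArg (fun v => v j) hstart
      linarith
    -- per-coordinate difference tends to zero against every power
    have hkey : ∀ (j : Fin d) (k : ℕ),
        Tendsto (RS (fun u => x u j - y u j) (fun u => e u ^ k) a b) atTop (𝓝 0) := by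
      intro j k
      obtain ⟨Jx, hJx'⟩ := hJx j k
      obtain ⟨Jy, hJy'⟩ := hJy j k
      have hx1 := sigWord_cons_eval hab hs hemono hecont he0 hxcoord j k hJx'
      have hy1 := sigWord_cons_eval hab hs hemono hecont he0 hycoord j k hJy'
      have hw := hword (j :: List.replicate k i0)
      rw [hx1, hy1] at hw
      have hfac : (k.factorial : ℝ) ≠ 0 := by
        exact_mod_cast k.factorial_ne_zero
      have hcoef : s^k / (k.factorial : ℝ) ≠ 0 :=
        div_ne_zero (pow_ne_zero k hs0) hfac
      have hw2 : e b ^ k * x b j - e a ^ k * x a j - Jx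
          = e b ^ k * y b j - e a ^ k * y a j - Jy := by
        exact mul_left_cancel₀ hcoef hw
      have hsa : x a j = y a j := congrArg (fun v => v j) hstart
      have hJeq : Jx = Jy := by
        rw [hend j, hsa] at hw2
        linarith
      have hsub : ∀ n, RS (fun u => x u j - y u j) (fun u => e u ^ k) a b n
          = RS (fun u => x u j) (fun u => e u ^ k) a b n
            - RS (fun u => y u j) (fun u => e u ^ k) a b n :=
        fun n => RS_sub_left _ _ _ a b n
      have htend := hJx'.sub hJy'
      rw [hJeq, sub_self] at htend
      exact htend.congr fun n => (hsub n).symm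
    -- conclude coordinatewise equality via the analytic lemma
    have hzero : ∀ (j : Fin d), ∀ t ∈ Set.Icc a b, x t j = y t j := by
      intro j
      have hhc : ContinuousOn (fun u => x u j - y u j) (Set.Icc a b) :=
        (hxj j).sub (hyj j)
      have h1 := propP hab' hhc hecont hesm (hkey j)
      have h2 : ∀ t ∈ Set.Icc a b, -(x t j - y t j) ≤ 0 := by
        refine propP hab' (hhc.neg) hecont hesm ?_
        intro k
        have := (hkey j k).neg
        rw [neg_zero] at this
        exact this.congr fun n => (RS_neg_left _ _ a b n).symm
      intro t ht
      have := h1 t ht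
      have := h2 t ht
      linarith [h1 t ht, h2 t ht]
    intro t ht
    ext j
    exact hzero j t ht
  · intro heq
    exact signature_eq_of_eqOn hab heq


end
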